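/- Let a, b, c be positive integers with a = b + c. Then the set F(0,(a),(b,c)) of factorisations of type (0,(a),(b,c)) has cardinality exactly a!. Equivalently, the number of tuples (σ₁, τ, σ₂, L₂) where σ₁ ∈ S_a is a single a-cycle, τ ∈ S_a is a transposition, σ₂ = τ·σ₁, and L₂ is a (b,c)-labeling of σ₂ (i.e. σ₂ has exactly two cycles, of lengths b and c, labeled accordingly) equals a!; in the double Hurwitz number normalization this says h₀((a),(b,c)) = |F(0,(a),(b,c))|/a! = 1. -/

import Mathlib

open Equiv

/-- `L` is a `μ`-labeling of the permutation `σ` of `{1,…,d}`. -/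
def IsLabeling (d m : ℕ) (μ : Fin m → ℕ) (σ : Equiv.Perm (Fin d)) (L : Fin d → Fin m) : Prop :=
  (∀ x, L (σ x) = L x) ∧
  (∀ i, (Finset.univ.filter fun x => L x = i).card = μ i) ∧
  (∀ (i : Fin m) (x y : Fin d), L x = i → L y = i → ∃ k : ℤ, (σ ^ k) x = y)

/-- The subgroup generated by `S` acts transitively on `{1,…,d}`. -/
def IsTransitiveOn (d : ℕ) (S : Set (Equiv.Perm (Fin d))) : Prop :=
  ∀ x y : Fin d, ∃ g ∈ Subgroup.closure S, g x = y

/-- A tuple `(σ₁, L₁, (τ₁,…,τ_b), σ₂, L₂)`. -/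
abbrev FactTuple (d m n b : ℕ) :=
  Equiv.Perm (Fin d) × (Fin d → Fin m) × (Fin b → Equiv.Perm (Fin d)) ×
    Equiv.Perm (Fin d) × (Fin d → Fin n)

/-- A factorisation of type `(g,μ,ν)`. -/
def IsFactorisation (d m n b : ℕ) (μ : Fin m → ℕ) (ν : Fin n → ℕ)
    (F : FactTuple d m n b) : Prop :=
  IsLabeling d m μ F.1 F.2.1 ∧
  IsLabeling d n ν F.2.2.2.1 F.2.2.2.2 ∧
  (∀ i, (F.2.2.1 i).IsSwap) ∧
  IsTransitiveOn d ({F.1, F.2.2.2.1} ∪ Set.range F.2.2.1) ∧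
  ((List.ofFn F.2.2.1).reverse).prod * F.1 = F.2.2.2.1

/-! ### Auxiliary material -/

theorem Equiv.Perm.inv_apply_self {α : Type*} (f : Perm α) (x : α) : f⁻¹ (f x) = x :=
  f.symm_apply_apply x

theorem Equiv.Perm.apply_inv_self {α : Type*} (f : Perm α) (x : α) : f (f⁻¹ x) = x :=
  f.apply_symm_apply x

namespace Stmt8Aux

open Fin.NatCast Fin.CommRing

/-- The standard `(b,c)`-label on `Fin a`. -/
def stdLabel (a b : ℕ) (x : Fin a) : Fin 2 := if x.val < b then 0 else 1

variable {a b c : ℕ}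

section s

variable [NeZero a]

/-- The rotation of `Fin a`. -/
def rot (a : ℕ) [NeZero a] : Perm (Fin a) := Equiv.addLeft (1 : Fin a)

lemma rot_pow_apply (k : ℕ) (x : Fin a) : ((rot a) ^ k) x = (k : Fin a) + x := by
  induction k generalizing x with
  | zero => simp
  | succ n ih =>
    rw [pow_succ', Perm.mul_apply, ih]
    show (1 : Fin a) + ((n : Fin a) + x) = _
    push_cast
    ring

/-- The model split permutation: swap `0 b` times the rotation. -/
def sperm (a b : ℕ) [NeZero a] : Perm (Fin a) := swap (0 : Fin a) (b : Fin a) * rot a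

lemma val_one' (h2 : 2 ≤ a) : ((1 : Fin a)).val = 1 := by
  rw [Fin.val_one']
  exact Nat.mod_eq_of_lt h2

lemma sperm_val (hb : 0 < b) (hba : b < a) (x : Fin a) :
    (sperm a b x).val =
      if x.val + 1 = b then 0 else if x.val + 1 = a then b else x.val + 1 := by
  have h2 : 2 ≤ a := by omega
  have hbv : ((b : Fin a)).val = b := Fin.val_cast_of_lt hba
  have hx := x.isLt
  have h1x : ((1 : Fin a) + x).val = (x.val + 1) % a := by
    rw [Fin.add_def, val_one' h2, add_comm]
  show (swap (0 : Fin a) (b : Fin a) ((1 : Fin a) + x)).val = _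
  by_cases hB : x.val + 1 = b
  · have heq : (1 : Fin a) + x = (b : Fin a) := by
      apply Fin.ext
      rw [h1x, hbv, Nat.mod_eq_of_lt (by omega), hB]
    rw [heq, swap_apply_right, if_pos hB]
    rfl
  · by_cases hA : x.val + 1 = a
    · have heq : (1 : Fin a) + x = 0 := by
        apply Fin.ext
        rw [h1x, hA, Nat.mod_self]
        rfl
      rw [heq, swap_apply_left, if_neg hB, if_pos hA, hbv]
    · have hlt : x.val + 1 < a := by omega
      have hv : ((1 : Fin a) + x).val = x.val + 1 := by
        rw [h1x, Nat.mod_eq_of_lt hlt]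
      have hne0 : (1 : Fin a) + x ≠ 0 := by
        intro h
        have := congrArg Fin.val h
        rw [hv] at this
        simp at this
      have hneb : (1 : Fin a) + x ≠ (b : Fin a) := by
        intro h
        have := congrArg Fin.val h
        rw [hv, hbv] at this
        exact hB this
      rw [swap_apply_of_ne_of_ne hne0 hneb, hv, if_neg hB, if_neg hA]

lemma stdLabel_sperm (hb : 0 < b) (hba : b < a) (x : Fin a) :
    stdLabel a b (sperm a b x) = stdLabel a b x := by
  have hv := sperm_val hb hba (a := a) x
  have hx := x.isLt
  have hiff : (sperm a b x).val < b ↔ x.val < b := by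
    rw [hv]; split_ifs <;> omega
  unfold stdLabel
  rw [if_congr hiff rfl rfl]

lemma sperm_pow_orbit0 (hb : 0 < b) (hba : b < a) :
    ∀ j, (hj : j < b) → ((sperm a b) ^ j) ⟨0, by omega⟩ = ⟨j, by omega⟩ := by
  intro j hj
  induction j with
  | zero => simp
  | succ n ih =>
    rw [pow_succ', Perm.mul_apply, ih (by omega)]
    apply Fin.ext
    rw [sperm_val hb hba]
    show (if n + 1 = b then 0 else if n + 1 = a then b else n + 1) = n + 1
    rw [if_neg (by omega), if_neg (by omega)]

lemma sperm_pow_b (hb : 0 < b) (hba : b < a) :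
    ((sperm a b) ^ b) (⟨0, by omega⟩ : Fin a) = ⟨0, by omega⟩ := by
  obtain ⟨b', rfl⟩ : ∃ b', b = b' + 1 := ⟨b - 1, by omega⟩
  rw [pow_succ', Perm.mul_apply, sperm_pow_orbit0 hb hba b' (by omega)]
  apply Fin.ext
  rw [sperm_val hb hba]
  simp

lemma sperm_pow_orbit1 (hb : 0 < b) (habc : a = b + c) :
    ∀ j, (hj : j < c) → ((sperm a b) ^ j) ⟨b, by omega⟩ = ⟨b + j, by omega⟩ := by
  intro j hj
  induction j with
  | zero => simp
  | succ n ih =>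
    rw [pow_succ', Perm.mul_apply, ih (by omega)]
    apply Fin.ext
    rw [sperm_val hb (by omega)]
    show (if b + n + 1 = b then 0 else if b + n + 1 = a then b else b + n + 1) = b + (n+1)
    rw [if_neg (by omega), if_neg (by omega)]
    omega

lemma sperm_pow_c (hb : 0 < b) (hc : 0 < c) (habc : a = b + c) :
    ((sperm a b) ^ c) (⟨b, by omega⟩ : Fin a) = ⟨b, by omega⟩ := by
  obtain ⟨c', rfl⟩ : ∃ c', c = c' + 1 := ⟨c - 1, by omega⟩
  rw [pow_succ', Perm.mul_apply, sperm_pow_orbit1 hb habc c' (by omega)]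
  apply Fin.ext
  rw [sperm_val hb (by omega)]
  have : b + c' + 1 = a := by omega
  simp [this]
  omega

/-- transitivity within the first fiber -/
lemma sperm_trans0 (hb : 0 < b) (hba : b < a) (x y : Fin a)
    (hx : x.val < b) (hy : y.val < b) :
    ∃ k : ℕ, ((sperm a b) ^ k) x = y := by
  refine ⟨(b - x.val) + y.val, ?_⟩
  have hx' : ((sperm a b) ^ x.val) ⟨0, by omega⟩ = x := by
    rw [sperm_pow_orbit0 hb hba x.val hx]
  calc ((sperm a b) ^ (b - x.val + y.val)) x
      = ((sperm a b) ^ (b - x.val + y.val)) (((sperm a b) ^ x.val) ⟨0, by omega⟩) := by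
        rw [hx']
    _ = ((sperm a b) ^ (b - x.val + y.val + x.val)) ⟨0, by omega⟩ := by
        rw [← Perm.mul_apply, ← pow_add]
    _ = ((sperm a b) ^ (y.val + b)) ⟨0, by omega⟩ := by
        have he : b - x.val + y.val + x.val = y.val + b := by omega
        rw [he]
    _ = ((sperm a b) ^ y.val) (((sperm a b) ^ b) ⟨0, by omega⟩) := by
        rw [← Perm.mul_apply, ← pow_add]
    _ = y := by
        rw [sperm_pow_b hb hba, sperm_pow_orbit0 hb hba y.val hy]

lemma sperm_trans1 (hb : 0 < b) (hc : 0 < c) (habc : a = b + c) (x y : Fin a)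
    (hx : b ≤ x.val) (hy : b ≤ y.val) :
    ∃ k : ℕ, ((sperm a b) ^ k) x = y := by
  have hxa := x.isLt
  have hya := y.isLt
  refine ⟨(c - (x.val - b)) + (y.val - b), ?_⟩
  have hx' : ((sperm a b) ^ (x.val - b)) ⟨b, by omega⟩ = x := by
    rw [sperm_pow_orbit1 hb habc (x.val - b) (by omega)]
    apply Fin.ext
    show b + (x.val - b) = x.val
    omega
  calc ((sperm a b) ^ (c - (x.val - b) + (y.val - b))) x
      = ((sperm a b) ^ (c - (x.val - b) + (y.val - b)))
          (((sperm a b) ^ (x.val - b)) ⟨b, by omega⟩) := by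
        rw [hx']
    _ = ((sperm a b) ^ (c - (x.val - b) + (y.val - b) + (x.val - b))) ⟨b, by omega⟩ := by
        rw [← Perm.mul_apply, ← pow_add]
    _ = ((sperm a b) ^ ((y.val - b) + c)) ⟨b, by omega⟩ := by
        have he : c - (x.val - b) + (y.val - b) + (x.val - b) = (y.val - b) + c := by omega
        rw [he]
    _ = ((sperm a b) ^ (y.val - b)) (((sperm a b) ^ c) ⟨b, by omega⟩) := by
        rw [← Perm.mul_apply, ← pow_add]
    _ = y := by
        rw [sperm_pow_c hb hc habc, sperm_pow_orbit1 hb habc (y.val - b) (by omega)]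
        apply Fin.ext
        show b + (y.val - b) = y.val
        omega

end s

lemma card_filter_val_lt (hba : b ≤ a) :
    (Finset.univ.filter fun x : Fin a => x.val < b).card = b := by
  have : (Finset.univ.filter fun x : Fin a => x.val < b)
      = Finset.univ.map (Fin.castLEEmb hba) := by
    ext x
    simp [Fin.castLEEmb, Fin.castLE]
    constructor
    · intro h; exact ⟨⟨x.val, h⟩, Fin.ext rfl⟩
    · rintro ⟨y, rfl⟩; exact y.isLt
  rw [this, Finset.card_map, Finset.card_univ, Fintype.card_fin]

lemma card_filter_equiv {α β : Type*} [Fintype α] [Fintype β] (e : α ≃ β)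
    (p : β → Prop) [DecidablePred p] :
    (Finset.univ.filter fun x : α => p (e x)).card = (Finset.univ.filter p).card := by
  apply Finset.card_bij (fun x _ => e x)
  · intro x hx; simp at hx ⊢; exact hx
  · intro x _ y _ h; exact e.injective h
  · intro y hy
    refine ⟨e.symm y, ?_, by simp⟩
    simp at hy ⊢
    simpa using hy

variable [NeZero a]

/-- The bijection from `Perm (Fin a)` to factorisations. -/
def Phi (a b : ℕ) [NeZero a] (π : Perm (Fin a)) : FactTuple a 1 2 1 :=
  (π * rot a * π⁻¹, fun _ => 0, fun _ => swap (π 0) (π (b : Fin a)),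
    π * sperm a b * π⁻¹, fun z => stdLabel a b (π⁻¹ z))

lemma Phi_mem (hb : 0 < b) (hc : 0 < c) (habc : a = b + c) (π : Perm (Fin a)) :
    IsFactorisation a 1 2 1 (fun _ => a) ![b, c] (Phi a b π) := by
  have hba : b < a := by omega
  have hbv : ((b : Fin a)).val = b := Fin.val_cast_of_lt hba
  have hconj : ∀ (f : Perm (Fin a)) (k : ℕ) (x : Fin a),
      ((π * f * π⁻¹) ^ k) x = π ((f ^ k) (π⁻¹ x)) := by
    intro f k x
    rw [conj_pow]
    rfl
  refine ⟨⟨?_, ?_, ?_⟩, ⟨?_, ?_, ?_⟩, ?_, ?_, ?_⟩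
  · intro x; exact Subsingleton.elim _ _
  · intro i
    show (Finset.univ.filter fun _ : Fin a => (0 : Fin 1) = i).card = a
    have h : ∀ x ∈ (Finset.univ : Finset (Fin a)), (0 : Fin 1) = i :=
      fun x _ => Subsingleton.elim _ _
    rw [Finset.filter_true_of_mem h, Finset.card_univ, Fintype.card_fin]
  · -- transitivity of σ₁ fibers
    intro i x y _ _
    refine ⟨(((π⁻¹ y) - (π⁻¹ x)).val : ℤ), ?_⟩
    rw [zpow_natCast]
    show ((π * rot a * π⁻¹) ^ _) x = y
    rw [hconj, rot_pow_apply, Fin.cast_val_eq_self, sub_add_cancel]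
    simp
  · -- L₂ invariant under σ₂
    intro x
    show stdLabel a b (π⁻¹ ((π * sperm a b * π⁻¹) x)) = stdLabel a b (π⁻¹ x)
    have : π⁻¹ ((π * sperm a b * π⁻¹) x) = sperm a b (π⁻¹ x) := by
      simp [Perm.mul_apply]
    rw [this, stdLabel_sperm hb hba]
  · -- fiber cardinalities
    intro i
    show (Finset.univ.filter fun z => stdLabel a b (π⁻¹ z) = i).card = _
    rw [card_filter_equiv π⁻¹ (fun x => stdLabel a b x = i)]
    have h0 : ∀ x : Fin a, (stdLabel a b x = 0) ↔ x.val < b := by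
      intro x; unfold stdLabel
      by_cases h : x.val < b <;> simp [h]
    have h1 : ∀ x : Fin a, (stdLabel a b x = 1) ↔ ¬ x.val < b := by
      intro x; unfold stdLabel
      by_cases h : x.val < b <;> simp [h]
    have hi : i = 0 ∨ i = 1 := by
      revert i
      decide
    rcases hi with rfl | rfl
    · simp only [h0]
      rw [card_filter_val_lt hba.le]
      simp
    · simp only [h1]
      rw [Finset.filter_not, Finset.card_sdiff_of_subset (Finset.filter_subset _ _),
        card_filter_val_lt hba.le]
      simp
      omega
  · -- transitivity of σ₂ fibers
    intro i x y hx hy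
    show ∃ k : ℤ, ((π * sperm a b * π⁻¹) ^ k) x = y
    have key : ∃ k : ℕ, ((sperm a b) ^ k) (π⁻¹ x) = π⁻¹ y := by
      have h0 : ∀ z : Fin a, stdLabel a b z = 0 → z.val < b := by
        intro z hz; unfold stdLabel at hz
        by_contra h; simp [h] at hz
      have h1 : ∀ z : Fin a, stdLabel a b z = 1 → b ≤ z.val := by
        intro z hz; unfold stdLabel at hz
        by_contra h; simp at h; simp [h] at hz
      have hx' : stdLabel a b (π⁻¹ x) = i := hx
      have hy' : stdLabel a b (π⁻¹ y) = i := hy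
      fin_cases i
      · exact sperm_trans0 hb hba _ _ (h0 _ hx') (h0 _ hy')
      · exact sperm_trans1 hb hc habc _ _ (h1 _ hx') (h1 _ hy')
    obtain ⟨k, hk⟩ := key
    refine ⟨(k : ℤ), ?_⟩
    rw [zpow_natCast, hconj, hk]
    simp
  · -- swaps
    intro i
    refine ⟨π 0, π (b : Fin a), ?_, rfl⟩
    intro h
    have := π.injective h
    have := congrArg Fin.val this
    rw [hbv] at this
    simp at this
    omega
  · -- transitivity
    intro x y
    have hmem : (π * rot a * π⁻¹ : Perm (Fin a)) ∈
        ({(Phi a b π).1, (Phi a b π).2.2.2.1} ∪ Set.range (Phi a b π).2.2.1 :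
          Set (Perm (Fin a))) := by
      left; left; rfl
    refine ⟨(π * rot a * π⁻¹) ^ (((π⁻¹ y) - (π⁻¹ x)).val), ?_, ?_⟩
    · exact pow_mem (Subgroup.subset_closure hmem) _
    · rw [hconj, rot_pow_apply, Fin.cast_val_eq_self, sub_add_cancel]
      simp
  · -- product
    show (List.ofFn fun _ : Fin 1 => swap (π 0) (π (b : Fin a))).reverse.prod *
        (π * rot a * π⁻¹) = π * sperm a b * π⁻¹
    have : (List.ofFn fun _ : Fin 1 => swap (π 0) (π (b : Fin a))).reverse.prod
        = swap (π 0) (π (b : Fin a)) := by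
      simp [List.ofFn_succ]
    rw [this, sperm]
    have hsplit : π * (swap (0 : Fin a) (b : Fin a) * rot a) * π⁻¹
        = (π * swap (0 : Fin a) (b : Fin a) * π⁻¹) * (π * rot a * π⁻¹) := by
      group
    rw [hsplit, ← swap_apply_apply]



lemma fin2 : ∀ x : Fin 2, x = 0 ∨ x = 1 := by decide

lemma Phi_injective (hb : 0 < b) (hc : 0 < c) (habc : a = b + c) :
    Function.Injective (Phi a b) := by
  intro π π' h
  have hba : b < a := by omega
  have hbv : ((b : Fin a)).val = b := Fin.val_cast_of_lt hba
  have hσ : π * rot a * π⁻¹ = π' * rot a * π'⁻¹ := congrArg Prod.fst h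
  have hτ0 : swap (π 0) (π (b : Fin a)) = swap (π' 0) (π' (b : Fin a)) :=
    congrFun (congrArg (fun F : FactTuple a 1 2 1 => F.2.2.1) h) 0
  have hL : ∀ z, stdLabel a b (π⁻¹ z) = stdLabel a b (π'⁻¹ z) :=
    fun z => congrFun (congrArg (fun F : FactTuple a 1 2 1 => F.2.2.2.2) h) z
  have hbne : (b : Fin a) ≠ 0 := by
    intro hh
    have := congrArg Fin.val hh
    rw [hbv] at this
    simp at this
    omega
  have hlab0 : stdLabel a b 0 = 0 := by
    unfold stdLabel
    rw [if_pos]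
    simp [hb]
  have hlabb : stdLabel a b (b : Fin a) = 1 := by
    unfold stdLabel
    rw [if_neg]
    rw [hbv]
    omega
  have h00 : π' 0 = π 0 := by
    have h1 : swap (π 0) (π (b : Fin a)) (π' 0) ≠ π' 0 := by
      rw [hτ0, swap_apply_left]
      intro hh
      exact hbne (π'.injective hh)
    have h2 : π' 0 = π 0 ∨ π' 0 = π (b : Fin a) := by
      by_contra hcon
      push_neg at hcon
      exact h1 (swap_apply_of_ne_of_ne hcon.1 hcon.2)
    rcases h2 with h2 | h2
    · exact h2
    · exfalso
      have hz := hL (π (b : Fin a))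
      rw [Perm.inv_apply_self, hlabb, ← h2, Perm.inv_apply_self, hlab0] at hz
      exact one_ne_zero hz
  have hpt : ∀ x : Fin a, π'⁻¹ (π ((1 : Fin a) + x)) = 1 + π'⁻¹ (π x) := by
    intro x
    have := congrArg (fun f : Perm (Fin a) => f (π x)) hσ
    simp only [Perm.mul_apply, Perm.inv_apply_self] at this
    have hthis : π (rot a x) = π' (rot a (π'⁻¹ (π x))) := this
    have : π'⁻¹ (π (rot a x)) = rot a (π'⁻¹ (π x)) := by
      rw [hthis, Perm.inv_apply_self]
    exact this
  have hg : ∀ n : ℕ, π'⁻¹ (π ((n : Fin a))) = (n : Fin a) := by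
    intro n
    induction n with
    | zero =>
      simp only [Nat.cast_zero]
      rw [← h00, Perm.inv_apply_self]
    | succ n ih =>
      have hc1 : ((n + 1 : ℕ) : Fin a) = 1 + (n : Fin a) := by
        push_cast
        ring
      rw [hc1, hpt, ih]
  have : ∀ x : Fin a, π x = π' x := by
    intro x
    have hx := hg x.val
    rw [Fin.cast_val_eq_self] at hx
    calc π x = π' (π'⁻¹ (π x)) := by rw [Perm.apply_inv_self]
    _ = π' x := by rw [hx]
  exact Equiv.ext this

lemma Phi_surjective (hb : 0 < b) (hc : 0 < c) (habc : a = b + c)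
    (F : FactTuple a 1 2 1)
    (hF : IsFactorisation a 1 2 1 (fun _ => a) ![b, c] F) :
    ∃ π : Perm (Fin a), Phi a b π = F := by
  obtain ⟨σ₁, L₁, T, σ₂, L₂⟩ := F
  obtain ⟨hL1, hL2, hswap, htr, hprod⟩ := hF
  have hba : b < a := by omega
  have h2a : 2 ≤ a := by omega
  have hbv : ((b : Fin a)).val = b := Fin.val_cast_of_lt hba
  have hprod' : T 0 * σ₁ = σ₂ := by
    have : (List.ofFn T).reverse.prod = T 0 := by
      simp [List.ofFn_succ]
    rw [← this]
    exact hprod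
  have htrans : ∀ x y : Fin a, ∃ k : ℤ, (σ₁ ^ k) x = y :=
    fun x y => hL1.2.2 0 x y (Subsingleton.elim _ _) (Subsingleton.elim _ _)
  haveI : Nontrivial (Fin a) := Fin.nontrivial_iff_two_le.mpr h2a
  have hfix : ∀ x : Fin a, σ₁ x ≠ x := by
    intro x hxx
    obtain ⟨y, hy⟩ := exists_ne x
    obtain ⟨k, hk⟩ := htrans x y
    rw [Perm.zpow_apply_eq_self_of_apply_eq_self hxx] at hk
    exact hy hk.symm
  obtain ⟨u', v', huv', hτ'⟩ := hswap 0
  replace hτ' : T 0 = swap u' v' := hτ'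
  have hcyc : σ₁.IsCycle := ⟨u', hfix u', fun y _ => htrans u' y⟩
  have horder : orderOf σ₁ = a := by
    rw [hcyc.orderOf]
    have : σ₁.support = Finset.univ :=
      Finset.eq_univ_iff_forall.mpr fun x => Perm.mem_support.mpr (hfix x)
    rw [this, Finset.card_univ, Fintype.card_fin]
  have hσa : σ₁ ^ a = 1 := by
    have := pow_orderOf_eq_one σ₁
    rw [horder] at this
    exact this
  have hL2σ : ∀ z, L₂ (σ₂ z) = L₂ z := hL2.1
  -- the two endpoints of the swap have distinct labels
  have hlabne : L₂ u' ≠ L₂ v' := by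
    intro hsame
    set i := L₂ u' with hidef
    have hstep : ∀ x, L₂ x = i → L₂ (σ₁ x) = i := by
      intro x hx
      have hσ1x : σ₁ x = swap u' v' (σ₂ x) := by
        rw [← hprod', hτ']
        simp [Perm.mul_apply, swap_apply_self]
      by_cases h1 : σ₂ x = u'
      · rw [hσ1x, h1, swap_apply_left, ← hsame]
      · by_cases h2 : σ₂ x = v'
        · rw [hσ1x, h2, swap_apply_right]
        · rw [hσ1x, swap_apply_of_ne_of_ne h1 h2, hL2σ, hx]
    have hstep' : ∀ x, L₂ x = i → L₂ (σ₁⁻¹ x) = i := by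
      intro x hx
      have hL2σ' : ∀ z, L₂ (σ₂⁻¹ z) = L₂ z := by
        intro z
        have := hL2σ (σ₂⁻¹ z)
        rw [Perm.apply_inv_self] at this
        exact this.symm
      have hσ1x : σ₁⁻¹ x = σ₂⁻¹ (swap u' v' x) := by
        rw [← hprod', hτ']
        simp
      by_cases h1 : x = u'
      · rw [hσ1x, h1, swap_apply_left, hL2σ', ← hsame]
      · by_cases h2 : x = v'
        · rw [hσ1x, h2, swap_apply_right, hL2σ', hidef]
        · rw [hσ1x, swap_apply_of_ne_of_ne h1 h2, hL2σ', hx]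
    have hzpow : ∀ (k : ℤ) (x : Fin a), L₂ x = i → L₂ ((σ₁ ^ k) x) = i := by
      intro k
      induction k using Int.induction_on with
      | zero => intro x hx; simpa using hx
      | succ n ih =>
        intro x hx
        have he : (σ₁ ^ ((n : ℤ) + 1)) x = (σ₁ ^ (n : ℤ)) (σ₁ x) := by
          rw [zpow_add_one, Perm.mul_apply]
        rw [he]
        exact ih (σ₁ x) (hstep x hx)
      | pred n ih =>
        intro x hx
        have he : (σ₁ ^ (-(n : ℤ) - 1)) x = (σ₁ ^ (-(n : ℤ))) (σ₁⁻¹ x) := by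
          rw [zpow_sub_one, Perm.mul_apply]
        rw [he]
        exact ih (σ₁⁻¹ x) (hstep' x hx)
    have hj : ∃ j : Fin 2, j ≠ i := by
      rcases fin2 i with hi | hi
      · exact ⟨1, by rw [hi]; decide⟩
      · exact ⟨0, by rw [hi]; decide⟩
    obtain ⟨j, hji⟩ := hj
    have hpos : 0 < (Finset.univ.filter fun x => L₂ x = j).card := by
      rw [hL2.2.1 j]
      rcases fin2 j with hj' | hj' <;> rw [hj'] <;> simp [hb, hc]
    obtain ⟨y, hy⟩ := Finset.card_pos.mp hpos
    have hyj : L₂ y = j := (Finset.mem_filter.mp hy).2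
    obtain ⟨k, hk⟩ := htrans u' y
    have := hzpow k u' rfl
    rw [hk, hyj] at this
    exact hji this
  -- normalize endpoints so that `u` has label 0
  obtain ⟨u, v, huv, hτuv, hu0, hv1⟩ :
      ∃ u v : Fin a, u ≠ v ∧ T 0 = swap u v ∧ L₂ u = 0 ∧ L₂ v = 1 := by
    rcases fin2 (L₂ u') with h | h
    · have hv' : L₂ v' = 1 := by
        rcases fin2 (L₂ v') with h' | h'
        · exact absurd (h.trans h'.symm) hlabne
        · exact h'
      exact ⟨u', v', huv', hτ', h, hv'⟩
    · have hv' : L₂ v' = 0 := by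
        rcases fin2 (L₂ v') with h' | h'
        · exact h'
        · exact absurd (h.trans h'.symm) hlabne
      exact ⟨v', u', huv'.symm, hτ'.trans (swap_comm u' v'), hv', h⟩
  -- injectivity of powers applied to u
  have powinj : ∀ m n : ℕ, m < a → n < a → (σ₁ ^ m) u = (σ₁ ^ n) u → m = n := by
    have key : ∀ m n : ℕ, m ≤ n → n < a → (σ₁ ^ m) u = (σ₁ ^ n) u → m = n := by
      intro m n hmn hna he
      have h1 : (σ₁ ^ (n - m)) u = u := by
        apply (σ₁ ^ m).injective
        rw [← Perm.mul_apply, ← pow_add]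
        have hmm : m + (n - m) = n := by omega
        rw [hmm]
        exact he.symm
      have h2 : σ₁ ^ (n - m) = 1 := (hcyc.pow_eq_one_iff' (hfix u)).mpr h1
      have h3 := orderOf_dvd_of_pow_eq_one h2
      rw [horder] at h3
      have h4 : n - m = 0 := Nat.eq_zero_of_dvd_of_lt h3 (by omega)
      omega
    intro m n hma hna he
    rcases le_total m n with h | h
    · exact key m n h hna he
    · exact (key n m h hma he.symm).symm
  have hinj : Function.Injective (fun i : Fin a => (σ₁ ^ (i.val)) u) := by
    intro i j hij
    exact Fin.ext (powinj i.val j.val i.isLt j.isLt hij)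
  have hbij : Function.Bijective (fun i : Fin a => (σ₁ ^ (i.val)) u) :=
    Finite.injective_iff_bijective.mp hinj
  let π : Perm (Fin a) := Equiv.ofBijective _ hbij
  have hπ : ∀ i : Fin a, π i = (σ₁ ^ (i.val)) u := fun _ => rfl
  have hu : π 0 = u := by
    rw [hπ]
    simp
  have hπconj : π * rot a * π⁻¹ = σ₁ := by
    have hcomm : ∀ i : Fin a, π (rot a i) = σ₁ (π i) := by
      intro i
      have h1v : ((rot a i)).val = (1 + i.val) % a := by
        show (((1 : Fin a) + i)).val = _
        rw [Fin.add_def, val_one' h2a]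
      rw [hπ, hπ]
      have hmod : σ₁ ^ ((1 + i.val) % a) = σ₁ ^ (1 + i.val) := by
        have := pow_mod_orderOf σ₁ (1 + i.val)
        rw [horder] at this
        exact this
      calc (σ₁ ^ ((rot a i)).val) u = (σ₁ ^ ((1 + i.val) % a)) u := by rw [h1v]
      _ = (σ₁ ^ (1 + i.val)) u := by rw [hmod]
      _ = σ₁ ((σ₁ ^ i.val) u) := by
          rw [add_comm 1 i.val, ← Perm.mul_apply, ← pow_succ']
    apply Equiv.ext
    intro x
    have := hcomm (π⁻¹ x)
    simp only [Perm.apply_inv_self] at this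
    simpa [Perm.mul_apply] using this
  obtain ⟨jv, hjv⟩ := hbij.surjective v
  have hjvπ : π jv = v := hjv
  have hjv0 : jv.val ≠ 0 := by
    intro hh
    apply huv
    rw [← hu, ← hjvπ]
    congr 1
    exact Fin.ext hh.symm
  have hσ₂ : σ₂ = swap u v * σ₁ := by rw [← hprod', hτuv]
  have claim1 : ∀ m, m < jv.val → (σ₂ ^ m) u = (σ₁ ^ m) u := by
    intro m hm
    induction m with
    | zero => rfl
    | succ n ih =>
      rw [pow_succ', Perm.mul_apply, ih (by omega), hσ₂, Perm.mul_apply]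
      have hval : ((σ₁ ^ (n + 1)) u) = σ₁ ((σ₁ ^ n) u) := by
        rw [← Perm.mul_apply, ← pow_succ']
      rw [← hval]
      apply swap_apply_of_ne_of_ne
      · intro hh
        rw [← hu] at hh
        have := hinj (show π ⟨n + 1, by omega⟩ = π 0 from hh)
        have := congrArg Fin.val this
        simp at this
      · intro hh
        rw [← hjvπ] at hh
        have := hinj (show π ⟨n + 1, by omega⟩ = π jv from hh)
        have := congrArg Fin.val this
        simp at this
        omega
  have claim2 : (σ₂ ^ jv.val) u = u := by
    obtain ⟨t, ht⟩ : ∃ t, jv.val = t + 1 := ⟨jv.val - 1, by omega⟩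
    rw [ht, pow_succ', Perm.mul_apply, claim1 t (by omega), hσ₂, Perm.mul_apply]
    have hval : (σ₁ ^ (t + 1)) u = σ₁ ((σ₁ ^ t) u) := by
      rw [← Perm.mul_apply, ← pow_succ']
    rw [← hval, ← ht]
    have : (σ₁ ^ jv.val) u = v := hjvπ
    rw [this, swap_apply_right]
  have hL2pow : ∀ (m : ℕ) (z : Fin a), L₂ ((σ₂ ^ m) z) = L₂ z := by
    intro m z
    induction m with
    | zero => rfl
    | succ n ih => rw [pow_succ', Perm.mul_apply, hL2σ, ih]
  have claim3 : ∀ m, m < jv.val → L₂ ((σ₁ ^ m) u) = 0 := by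
    intro m hm
    rw [← claim1 m hm, hL2pow m u, hu0]
  have claim4 : ∀ y, L₂ y = 0 → ∃ m, m < jv.val ∧ (σ₁ ^ m) u = y := by
    intro y hy
    obtain ⟨k, hk⟩ := hL2.2.2 0 u y hu0 hy
    have hJ : 0 < (jv.val : ℤ) := by
      omega
    have hfixJ : (σ₂ ^ ((jv.val : ℤ))) u = u := by
      rw [zpow_natCast]
      exact claim2
    have hm0 : 0 ≤ k % (jv.val : ℤ) := Int.emod_nonneg k (by omega)
    have hm1 : k % (jv.val : ℤ) < (jv.val : ℤ) := Int.emod_lt_of_pos k hJ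
    have key : (σ₂ ^ k) u = (σ₂ ^ ((k % (jv.val : ℤ)).toNat)) u := by
      have hksplit : k = k % (jv.val : ℤ) + (jv.val : ℤ) * (k / (jv.val : ℤ)) :=
        (Int.emod_add_mul_ediv k (jv.val : ℤ)).symm
      have hinner : (σ₂ ^ ((jv.val : ℤ) * (k / (jv.val : ℤ)))) u = u := by
        rw [zpow_mul]
        exact Perm.zpow_apply_eq_self_of_apply_eq_self hfixJ _
      calc (σ₂ ^ k) u
          = (σ₂ ^ (k % (jv.val : ℤ) + (jv.val : ℤ) * (k / (jv.val : ℤ)))) u := by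
            rw [← hksplit]
        _ = (σ₂ ^ (k % (jv.val : ℤ))) ((σ₂ ^ ((jv.val : ℤ) * (k / (jv.val : ℤ)))) u) := by
            rw [zpow_add, Perm.mul_apply]
        _ = (σ₂ ^ (k % (jv.val : ℤ))) u := by rw [hinner]
        _ = (σ₂ ^ ((k % (jv.val : ℤ)).toNat)) u := by
            rw [← zpow_natCast, Int.toNat_of_nonneg hm0]
    have hmlt : (k % (jv.val : ℤ)).toNat < jv.val := by omega
    refine ⟨(k % (jv.val : ℤ)).toNat, hmlt, ?_⟩
    rw [← claim1 _ hmlt, ← key, hk]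
  have claim5 : jv.val = b := by
    have hcard0 : (Finset.univ.filter fun y => L₂ y = 0).card = b := by
      have := hL2.2.1 0
      simpa using this
    have hsets : (Finset.univ.filter fun y => L₂ y = 0)
        = (Finset.range jv.val).image (fun m => (σ₁ ^ m) u) := by
      ext y
      simp only [Finset.mem_filter, Finset.mem_univ, true_and, Finset.mem_image,
        Finset.mem_range]
      constructor
      · intro hy
        obtain ⟨m, hm, hme⟩ := claim4 y hy
        exact ⟨m, hm, hme⟩
      · rintro ⟨m, hm, rfl⟩
        exact claim3 m hm
    have hcardim : ((Finset.range jv.val).image (fun m => (σ₁ ^ m) u)).card = jv.val := by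
      rw [Finset.card_image_of_injOn, Finset.card_range]
      intro m hm m' hm' he
      simp only [Finset.coe_range, Set.mem_Iio] at hm hm'
      exact powinj m m' (lt_trans hm jv.isLt) (lt_trans hm' jv.isLt) he
    rw [hsets, hcardim] at hcard0
    exact hcard0
  -- assemble
  refine ⟨π, ?_⟩
  have hπb : π ((b : Fin a)) = v := by
    rw [hπ, hbv, ← claim5]
    exact hjvπ
  refine Prod.ext ?_ (Prod.ext ?_ (Prod.ext ?_ (Prod.ext ?_ ?_)))
  · exact hπconj
  · funext x
    exact Subsingleton.elim _ _
  · funext t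
    show swap (π 0) (π (b : Fin a)) = T t
    rw [hu, hπb, Subsingleton.elim t 0, hτuv]
  · show π * sperm a b * π⁻¹ = σ₂
    have hsplit : π * sperm a b * π⁻¹
        = (π * swap (0 : Fin a) (b : Fin a) * π⁻¹) * (π * rot a * π⁻¹) := by
      rw [sperm]
      group
    rw [hsplit, ← swap_apply_apply, hπconj, hu, hπb, hσ₂]
  · funext z
    show stdLabel a b (π⁻¹ z) = L₂ z
    obtain ⟨i, rfl⟩ := hbij.surjective z
    have hzi : (fun i : Fin a => (σ₁ ^ (i.val)) u) i = π i := rfl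
    rw [hzi, Perm.inv_apply_self]
    by_cases hib : i.val < b
    · have h0 : L₂ (π i) = 0 := by
        rw [hπ]
        exact claim3 i.val (by omega)
      rw [h0]
      unfold stdLabel
      rw [if_pos hib]
    · have h0 : L₂ (π i) ≠ 0 := by
        intro hh
        obtain ⟨m, hm, hme⟩ := claim4 (π i) hh
        have hmi := powinj m i.val (by omega) i.isLt (hme.trans (hπ i))
        omega
      have h1 : L₂ (π i) = 1 := (fin2 _).resolve_left h0
      rw [h1]
      unfold stdLabel
      rw [if_neg hib]

end Stmt8Aux

open Stmt8Aux in
/-- for positive integers `a = b + c`, the set of factorisations of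
type `(0,(a),(b,c))` (so with `m = 1`, `n = 2` and one transposition, since
`2·0 − 2 + 1 + 2 = 1`) has cardinality exactly `a!`; i.e. `h₀((a),(b,c)) = 1`. -/
theorem stmt8 (a b c : ℕ) (ha : 0 < a) (hb : 0 < b) (hc : 0 < c) (habc : a = b + c) :
    Nat.card {F : FactTuple a 1 2 1 //
        IsFactorisation a 1 2 1 (fun _ => a) ![b, c] F} = Nat.factorial a := by
  haveI : NeZero a := ⟨ha.ne'⟩
  have hbij : Function.Bijective (fun π : Perm (Fin a) =>
      (⟨Phi a b π, Phi_mem hb hc habc π⟩ :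
        {F : FactTuple a 1 2 1 // IsFactorisation a 1 2 1 (fun _ => a) ![b, c] F})) := by
    constructor
    · intro π π' h
      exact Phi_injective hb hc habc (congrArg Subtype.val h)
    · rintro ⟨F, hF⟩
      obtain ⟨π, hπ⟩ := Phi_surjective hb hc habc F hF
      exact ⟨π, Subtype.ext hπ⟩
  rw [← Nat.card_eq_of_bijective _ hbij, Nat.card_eq_fintype_card, Fintype.card_perm,
    Fintype.card_fin]
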